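/- For t ≥ 2, the number of partitions with distinct parts that are simultaneously t-core and (t+1)-core equals the Fibonacci number F_{t+1} (with F_0=0, F_1=1). -/

import Mathlib

/-- The hook length of the box in row i (0-indexed) and column j (1-indexed) of the Young
diagram of the partition (λ_1, ..., λ_ℓ): arm + leg + 1. -/
def hook (l : List ℕ) (i j : ℕ) : ℕ :=
  (l.getD i 0 - j) + ((l.drop (i + 1)).filter (fun p => decide (j ≤ p))).length + 1

/-- A partition is an s-core if none of its hook lengths equals s. -/
def IsCore (l : List ℕ) (s : ℕ) : Prop :=
  ∀ i j, i < l.length → 1 ≤ j → j ≤ l.getD i 0 → hook l i j ≠ s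

/-- The list of beta-numbers (first-column hook lengths) of a partition. -/
def bset : List ℕ → List ℕ
  | [] => []
  | a :: m => (a + m.length) :: bset m

lemma hook_cons_zero (a : ℕ) (m : List ℕ) (j : ℕ) :
    hook (a :: m) 0 j = (a - j) + (m.filter (fun p => decide (j ≤ p))).length + 1 := rfl

lemma bset_bound : ∀ (m : List ℕ) (b : ℕ), m.Pairwise (· > ·) → (∀ x ∈ m, x < b) →
    ∀ y ∈ bset m, y + 2 ≤ b + m.length := by
  intro m
  induction m with
  | nil => intro b _ _ y hy; simp [bset] at hy
  | cons c m'' ih =>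
    intro b hs hlt y hy
    rw [List.pairwise_cons] at hs
    rcases List.mem_cons.mp hy with h | h
    · have : c < b := hlt c (List.mem_cons_self)
      simp only [List.length_cons]; omega
    · have := ih c hs.2 hs.1 y h
      have : c < b := hlt c (List.mem_cons_self)
      have h2 := ih c hs.2 hs.1 y h
      simp only [List.length_cons]; omega

lemma no_consec : ∀ (m : List ℕ), m.Pairwise (· > ·) → ∀ x, x ∈ bset m → x + 1 ∈ bset m → False := by
  intro m
  induction m with
  | nil => intro _ x hx _; simp [bset] at hx
  | cons b m' ih =>
    intro hs x hx hx1
    rw [List.pairwise_cons] at hs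
    rcases List.mem_cons.mp hx with h | h <;> rcases List.mem_cons.mp hx1 with h1 | h1
    · omega
    · have := bset_bound m' b hs.2 hs.1 (x + 1) h1; omega
    · have := bset_bound m' b hs.2 hs.1 x h; omega
    · exact ih hs.2 x h h1

lemma skipval : ∀ (m : List ℕ), m.Pairwise (· > ·) → ∀ j ∈ m,
    j + (m.filter (fun p => decide (p < j))).length ∈ bset m := by
  intro m
  induction m with
  | nil => intro _ j hj; simp at hj
  | cons b m' ih =>
    intro hs j hj
    rw [List.pairwise_cons] at hs
    rcases List.mem_cons.mp hj with h | h
    · subst h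
      have hf : (m'.filter (fun p => decide (p < j))) = m' :=
        List.filter_eq_self.mpr (fun x hx => decide_eq_true (hs.1 x hx))
      have : ((j :: m').filter (fun p => decide (p < j))) = m' := by
        simp [List.filter_cons, hf]
      rw [this]
      exact List.mem_cons_self
    · have hjb : j < b := hs.1 j h
      have : ((b :: m').filter (fun p => decide (p < j))) =
          (m'.filter (fun p => decide (p < j))) := by
        simp [List.filter_cons]; omega
      rw [this]
      exact List.mem_cons_of_mem _ (ih hs.2 j h)

lemma filter_step : ∀ (m : List ℕ), m.Pairwise (· > ·) → ∀ j : ℕ,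
    (m.filter (fun p => decide (j ≤ p))).length ≤
      (m.filter (fun p => decide (j + 1 ≤ p))).length + 1 := by
  intro m
  induction m with
  | nil => intro _ j; simp
  | cons b m' ih =>
    intro hs j
    rw [List.pairwise_cons] at hs
    rcases Nat.lt_trichotomy b j with hb | hb | hb
    · have : ¬ (j ≤ b) := by omega
      have : ((b :: m').filter (fun p => decide (j ≤ p))) =
          (m'.filter (fun p => decide (j ≤ p))) := by simp [List.filter_cons]; omega
      rw [this]
      have : ((b :: m').filter (fun p => decide (j + 1 ≤ p))) =
          (m'.filter (fun p => decide (j + 1 ≤ p))) := by simp [List.filter_cons]; omega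
      rw [this]
      exact ih hs.2 j
    · subst hb
      have h1 : ((b :: m').filter (fun p => decide (b ≤ p))) =
          b :: (m'.filter (fun p => decide (b ≤ p))) := by simp [List.filter_cons]
      have h2 : (m'.filter (fun p => decide (b ≤ p))) = [] :=
        List.filter_eq_nil_iff.mpr (fun x hx => by
          have := hs.1 x hx; simp; omega)
      rw [h1, h2]
      simp
    · have h1 : ((b :: m').filter (fun p => decide (j ≤ p))) =
          b :: (m'.filter (fun p => decide (j ≤ p))) := by simp [List.filter_cons]; omega
      have h2 : ((b :: m').filter (fun p => decide (j + 1 ≤ p))) =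
          b :: (m'.filter (fun p => decide (j + 1 ≤ p))) := by simp [List.filter_cons]; omega
      rw [h1, h2]
      simpa using ih hs.2 j

lemma filter_mono : ∀ (m : List ℕ) (j : ℕ),
    (m.filter (fun p => decide (j + 1 ≤ p))).length ≤
      (m.filter (fun p => decide (j ≤ p))).length := by
  intro m j
  induction m with
  | nil => simp
  | cons b m' ih =>
    by_cases hb : j + 1 ≤ b
    · have h1 : ((b :: m').filter (fun p => decide (j ≤ p))) =
          b :: (m'.filter (fun p => decide (j ≤ p))) := by simp [List.filter_cons]; omega
      have h2 : ((b :: m').filter (fun p => decide (j + 1 ≤ p))) =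
          b :: (m'.filter (fun p => decide (j + 1 ≤ p))) := by simp [List.filter_cons]; omega
      rw [h1, h2]; simpa using ih
    · have h2 : ((b :: m').filter (fun p => decide (j + 1 ≤ p))) =
          (m'.filter (fun p => decide (j + 1 ≤ p))) := by simp [List.filter_cons]; omega
      rw [h2]
      by_cases hb' : j ≤ b
      · have h1 : ((b :: m').filter (fun p => decide (j ≤ p))) =
            b :: (m'.filter (fun p => decide (j ≤ p))) := by simp [List.filter_cons]; omega
        rw [h1]; simp only [List.length_cons]; omega
      · have h1 : ((b :: m').filter (fun p => decide (j ≤ p))) =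
            (m'.filter (fun p => decide (j ≤ p))) := by simp [List.filter_cons]; omega
        rw [h1]; exact ih

lemma filter_split : ∀ (m : List ℕ) (j : ℕ),
    (m.filter (fun p => decide (j ≤ p))).length +
      (m.filter (fun p => decide (p < j))).length = m.length := by
  intro m j
  induction m with
  | nil => simp
  | cons b m' ih =>
    by_cases hb : j ≤ b
    · have h1 : ((b :: m').filter (fun p => decide (j ≤ p))) =
          b :: (m'.filter (fun p => decide (j ≤ p))) := by simp [List.filter_cons]; omega
      have h2 : ((b :: m').filter (fun p => decide (p < j))) =
          (m'.filter (fun p => decide (p < j))) := by simp [List.filter_cons]; omega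
      rw [h1, h2]; simp only [List.length_cons]; omega
    · have h1 : ((b :: m').filter (fun p => decide (j ≤ p))) =
          (m'.filter (fun p => decide (j ≤ p))) := by simp [List.filter_cons]; omega
      have h2 : ((b :: m').filter (fun p => decide (p < j))) =
          b :: (m'.filter (fun p => decide (p < j))) := by simp [List.filter_cons]; omega
      rw [h1, h2]; simp only [List.length_cons]; omega

lemma filter_pos (m : List ℕ) (hp : ∀ p ∈ m, 0 < p) :
    (m.filter (fun p => decide (1 ≤ p))) = m :=
  List.filter_eq_self.mpr (fun x hx => decide_eq_true (hp x hx))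

/-- Key intermediate-value lemma: every value `v ≤ a + |m|` is realised as a hook length in
row 0, unless `(a + |m|) - v` is a beta-number of the tail. -/
lemma exists_hook (a : ℕ) (m : List ℕ) (hs : (a :: m).Pairwise (· > ·))
    (hp : ∀ p ∈ a :: m, 0 < p) (v : ℕ) (hv1 : 1 ≤ v) (hv2 : v ≤ a + m.length)
    (hns : (a + m.length - v) ∉ bset m) :
    ∃ j, 1 ≤ j ∧ j ≤ a ∧ hook (a :: m) 0 j = v := by
  rw [List.pairwise_cons] at hs
  have ha : 1 ≤ a := hp a (List.mem_cons_self)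
  have hca : (m.filter (fun p => decide (a ≤ p))).length = 0 := by
    rw [List.filter_eq_nil_iff.mpr (fun x hx => by have := hs.1 x hx; simp; omega)]
    rfl
  have hc1 : (m.filter (fun p => decide (1 ≤ p))).length = m.length := by
    rw [filter_pos m (fun p hp' => hp p (List.mem_cons_of_mem _ hp'))]
  have key : ∀ d j, 1 ≤ j → j ≤ a → a - j ≤ d →
      v ≤ (a - j) + (m.filter (fun p => decide (j ≤ p))).length + 1 →
      ∃ j', 1 ≤ j' ∧ j' ≤ a ∧
        (a - j') + (m.filter (fun p => decide (j' ≤ p))).length + 1 = v := by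
    intro d
    induction d with
    | zero =>
      intro j h1 h2 h3 h4
      have hja : j = a := by omega
      subst hja
      rw [hca] at h4
      exact ⟨j, h1, h2, by rw [hca]; omega⟩
    | succ d ih =>
      intro j h1 h2 h3 h4
      by_cases heq : (a - j) + (m.filter (fun p => decide (j ≤ p))).length + 1 = v
      · exact ⟨j, h1, h2, heq⟩
      have hlt : v < (a - j) + (m.filter (fun p => decide (j ≤ p))).length + 1 :=
        lt_of_le_of_ne h4 (fun h => heq h.symm)
      have hja : j < a := by
        by_contra hcon
        have hja' : j = a := by omega
        subst hja'
        rw [hca] at hlt; omega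
      by_cases hrec : v ≤ (a - (j + 1)) + (m.filter (fun p => decide (j + 1 ≤ p))).length + 1
      · exact ih (j + 1) (by omega) (by omega) (by omega) hrec
      · -- skip case: derive contradiction
        exfalso
        push_neg at hrec
        have hstep := filter_step m hs.2 j
        have hmono := filter_mono m j
        have hcj : (m.filter (fun p => decide (j ≤ p))).length =
            (m.filter (fun p => decide (j + 1 ≤ p))).length + 1 := by omega
        have hveq : v = (a - j) + (m.filter (fun p => decide (j ≤ p))).length := by omega
        have hjm : j ∈ m := by
          by_contra hjm
          have heqf : (m.filter (fun p => decide (j ≤ p))) =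
              (m.filter (fun p => decide (j + 1 ≤ p))) := by
            apply List.filter_congr
            intro x hx
            have : x ≠ j := fun h => hjm (h ▸ hx)
            simp; omega
          rw [heqf] at hcj
          omega
        have hsv := skipval m hs.2 j hjm
        have hsplit := filter_split m j
        have hkey : a + m.length - v = j + (m.filter (fun p => decide (p < j))).length := by
          omega
        exact hns (hkey ▸ hsv)
  obtain ⟨j', hj1, hj2, hj3⟩ := key a 1 le_rfl ha (by omega) (by rw [hc1]; omega)
  exact ⟨j', hj1, hj2, by rw [hook_cons_zero]; exact hj3⟩

/-- Forward direction: a nonempty distinct-part (t,t+1)-core satisfies head + length ≤ t. -/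
lemma fwd (t : ℕ) (ht : 1 ≤ t) (l : List ℕ) (hs : l.Pairwise (· > ·))
    (hp : ∀ p ∈ l, 0 < p) (h1 : IsCore l t) (h2 : IsCore l (t + 1)) :
    l = [] ∨ l.headI + l.length ≤ t := by
  cases l with
  | nil => exact Or.inl rfl
  | cons a m =>
    right
    by_contra hcon
    simp only [List.headI, List.length_cons] at hcon
    push_neg at hcon
    have ha : 1 ≤ a := hp a (List.mem_cons_self)
    have hH : t ≤ a + m.length := by omega
    have hpm : ∀ p ∈ m, 0 < p := fun p hp' => hp p (List.mem_cons_of_mem _ hp')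
    have hhook1 : hook (a :: m) 0 1 = a + m.length := by
      rw [hook_cons_zero, filter_pos m hpm]; omega
    have hlen : 0 < (a :: m).length := by simp
    have hgetD : (a :: m).getD 0 0 = a := rfl
    rcases Nat.lt_or_ge (a + m.length) (t + 2) with hcase | hcase
    · -- a + m.length = t or t + 1
      rcases Nat.eq_or_lt_of_le hH with hEq | hLt
      · exact h1 0 1 hlen le_rfl (hgetD ▸ ha) (by omega)
      · have : a + m.length = t + 1 := by omega
        exact h2 0 1 hlen le_rfl (hgetD ▸ ha) (by omega)
    · -- a + m.length ≥ t + 2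
      have m1 : (a + m.length - t) ∈ bset m := by
        by_contra hm
        obtain ⟨j, hj1, hj2, hj3⟩ := exists_hook a m hs hp t (by omega) (by omega) hm
        exact h1 0 j hlen hj1 (hgetD ▸ hj2) hj3
      have m2 : (a + m.length - (t + 1)) ∈ bset m := by
        by_contra hm
        obtain ⟨j, hj1, hj2, hj3⟩ := exists_hook a m hs hp (t + 1) (by omega) (by omega) hm
        exact h2 0 j hlen hj1 (hgetD ▸ hj2) hj3
      have hsm : m.Pairwise (· > ·) := (List.pairwise_cons.mp hs).2
      have heq : (a + m.length - (t + 1)) + 1 = a + m.length - t := by omega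
      exact no_consec m hsm _ m2 (heq ▸ m1)

lemma getD_le_headI : ∀ (l : List ℕ), l.Pairwise (· > ·) → ∀ i, i < l.length →
    l.getD i 0 ≤ l.headI := by
  intro l hl i hi
  cases l with
  | nil => simp at hi
  | cons a m =>
    cases i with
    | zero => simp
    | succ i =>
      rw [List.getD_cons_succ]
      simp only [List.headI]
      rw [List.pairwise_cons] at hl
      have hi' : i < m.length := by simpa using hi
      have : m.getD i 0 = m[i] := List.getD_eq_getElem m 0 hi'
      rw [this]
      exact le_of_lt (hl.1 _ (List.getElem_mem hi'))

/-- Backward direction: all hooks are at most headI + length - 1. -/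
lemma bwd (t : ℕ) (l : List ℕ) (hs : l.Pairwise (· > ·))
    (hb : l = [] ∨ l.headI + l.length ≤ t) (s : ℕ) (hst : t ≤ s) : IsCore l s := by
  intro i j hi hj1 hj2 hne
  rcases hb with hb | hb
  · subst hb; simp at hi
  have hfl : ((l.drop (i + 1)).filter (fun p => decide (j ≤ p))).length ≤ l.length - i - 1 := by
    calc ((l.drop (i + 1)).filter (fun p => decide (j ≤ p))).length
        ≤ (l.drop (i + 1)).length := List.length_filter_le _ _
      _ = l.length - (i + 1) := List.length_drop
      _ = l.length - i - 1 := by omega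
  have hgd := getD_le_headI l hs i hi
  have hhl : l.headI + l.length ≤ t := hb
  have : hook l i j ≤ l.headI + l.length - 1 := by
    rw [hook]
    omega
  omega

/-- Explicit enumeration of the distinct-part partitions with head + length ≤ t. -/
def L : ℕ → List (List ℕ)
  | 0 => [[]]
  | 1 => [[]]
  | (t + 2) => L (t + 1) ++ (L t).map (fun l => (t + 1 - l.length) :: l)

lemma headI_max : ∀ (m : List ℕ), m.Pairwise (· > ·) → ∀ b ∈ m, b ≤ m.headI := by
  intro m hm b hb
  cases m with
  | nil => simp at hb
  | cons c m' =>
    rw [List.pairwise_cons] at hm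
    rcases List.mem_cons.mp hb with h | h
    · simp [h]
    · exact le_of_lt (hm.1 b h)

lemma mem_L : ∀ t (l : List ℕ), l ∈ L t ↔
    (l.Pairwise (· > ·) ∧ (∀ p ∈ l, 0 < p) ∧ (l = [] ∨ l.headI + l.length ≤ t)) := by
  intro t
  induction t using Nat.strong_induction_on with
  | _ t ih =>
    match t with
    | 0 =>
      intro l
      constructor
      · intro hl
        simp only [L] at hl
        simp at hl
        subst hl
        exact ⟨List.Pairwise.nil, by simp, Or.inl rfl⟩
      · rintro ⟨hs, hp, h | h⟩
        · subst h; simp [L]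
        · cases l with
          | nil => simp [L]
          | cons a m =>
            exfalso
            have : 1 ≤ a := hp a (List.mem_cons_self)
            simp only [List.headI, List.length_cons] at h
            omega
    | 1 =>
      intro l
      constructor
      · intro hl
        simp only [L] at hl
        simp at hl
        subst hl
        exact ⟨List.Pairwise.nil, by simp, Or.inl rfl⟩
      · rintro ⟨hs, hp, h | h⟩
        · subst h; simp [L]
        · cases l with
          | nil => simp [L]
          | cons a m =>
            exfalso
            have : 1 ≤ a := hp a (List.mem_cons_self)
            simp only [List.headI, List.length_cons] at h
            omega
    | (n + 2) =>
      intro l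
      have ih1 := ih (n + 1) (by omega)
      have ih0 := ih n (by omega)
      constructor
      · intro hl
        simp only [L, List.mem_append, List.mem_map] at hl
        rcases hl with hl | ⟨m, hm, hml⟩
        · obtain ⟨hs, hp, hb⟩ := (ih1 l).mp hl
          refine ⟨hs, hp, ?_⟩
          rcases hb with hb | hb
          · exact Or.inl hb
          · exact Or.inr (by omega)
        · obtain ⟨hs, hp, hb⟩ := (ih0 m).mp hm
          subst hml
          have hlen : m.length ≤ n := by
            rcases hb with hb | hb
            · subst hb; simp
            · cases m with
              | nil => simp
              | cons c m' =>
                have : 1 ≤ c := hp c (List.mem_cons_self)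
                simp only [List.headI, List.length_cons] at hb ⊢
                omega
          refine ⟨?_, ?_, ?_⟩
          · rw [List.pairwise_cons]
            refine ⟨fun b hb' => ?_, hs⟩
            have h1 := headI_max m hs b hb'
            have h2 : m ≠ [] := fun h => by subst h; simp at hb'
            rcases hb with hb | hb
            · exact absurd hb h2
            · omega
          · intro p hp'
            rcases List.mem_cons.mp hp' with h | h
            · omega
            · exact hp p h
          · right
            simp only [List.headI, List.length_cons]
            omega
      · rintro ⟨hs, hp, hb⟩
        simp only [L, List.mem_append, List.mem_map]
        by_cases hsmall : l = [] ∨ l.headI + l.length ≤ n + 1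
        · exact Or.inl ((ih1 l).mpr ⟨hs, hp, hsmall⟩)
        · push_neg at hsmall
          obtain ⟨hne, hbig⟩ := hsmall
          have hb' : l.headI + l.length = n + 2 := by
            rcases hb with hb | hb
            · exact absurd hb hne
            · omega
          right
          cases l with
          | nil => exact absurd rfl hne
          | cons a m =>
            refine ⟨m, (ih0 m).mpr ⟨(List.pairwise_cons.mp hs).2,
              fun p hp' => hp p (List.mem_cons_of_mem _ hp'), ?_⟩, ?_⟩
            · cases m with
              | nil => exact Or.inl rfl
              | cons c m' =>
                right
                have hac : a > c := (List.pairwise_cons.mp hs).1 c (by simp [List.headI])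
                simp only [List.headI, List.length_cons] at hb' ⊢
                omega
            · simp only [List.headI, List.length_cons] at hb'
              have : a = n + 1 - m.length := by omega
              rw [← this]

lemma nodup_L : ∀ t, (L t).Nodup := by
  intro t
  induction t using Nat.strong_induction_on with
  | _ t ih =>
    match t with
    | 0 => simp [L]
    | 1 => simp [L]
    | (n + 2) =>
      rw [L, List.nodup_append']
      refine ⟨ih (n + 1) (by omega), ?_, ?_⟩
      · refine List.Nodup.map ?_ (ih n (by omega))
        intro x y h
        exact (List.cons_eq_cons.mp h).2
      · intro x hx hx'
        obtain ⟨hs, hp, hb⟩ := (mem_L (n + 1) x).mp hx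
        simp only [List.mem_map] at hx'
        obtain ⟨m, hm, hml⟩ := hx'
        obtain ⟨hs', hp', hb'⟩ := (mem_L n m).mp hm
        have hlen : m.length ≤ n := by
          rcases hb' with h | h
          · subst h; simp
          · cases m with
            | nil => simp
            | cons c m' =>
              have : 1 ≤ c := hp' c (List.mem_cons_self)
              simp only [List.headI, List.length_cons] at h ⊢
              omega
        subst hml
        rcases hb with h | h
        · simp at h
        · simp only [List.headI, List.length_cons] at h
          omega

lemma length_L : ∀ t, (L t).length = Nat.fib (t + 1) := by
  intro t
  induction t using Nat.strong_induction_on with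
  | _ t ih =>
    match t with
    | 0 => simp [L]
    | 1 => simp [L]
    | (n + 2) =>
      rw [L, List.length_append, List.length_map, ih (n + 1) (by omega), ih n (by omega)]
      have h1 : Nat.fib (n + 2 + 1) = Nat.fib (n + 1) + Nat.fib (n + 1 + 1) :=
        Nat.fib_add_two (n := n + 1)
      omega

theorem count_distinct_core (t : ℕ) (ht : 2 ≤ t) :
    {l : List ℕ | l.Pairwise (· > ·) ∧ (∀ p ∈ l, 0 < p) ∧
      IsCore l t ∧ IsCore l (t + 1)}.ncard = Nat.fib (t + 1) := by
  have hset : {l : List ℕ | l.Pairwise (· > ·) ∧ (∀ p ∈ l, 0 < p) ∧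
      IsCore l t ∧ IsCore l (t + 1)} = ((L t).toFinset : Set (List ℕ)) := by
    ext l
    simp only [Set.mem_setOf_eq, Finset.coe_sort_coe, List.coe_toFinset, Set.mem_setOf_eq,
      List.mem_toFinset]
    rw [mem_L]
    constructor
    · rintro ⟨hs, hp, h1, h2⟩
      exact ⟨hs, hp, fwd t (by omega) l hs hp h1 h2⟩
    · rintro ⟨hs, hp, hb⟩
      exact ⟨hs, hp, bwd t l hs hb t le_rfl, bwd t l hs hb (t + 1) (by omega)⟩
  rw [hset, Set.ncard_coe_finset, List.toFinset_card_of_nodup (nodup_L t), length_L]
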